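/- Let G be the (k+2)×(k+2) nonnegative matrix with G₁₂ = β_vh/δ_v, G₂₁ = β_hv/δ_h, G₂,(i+2) = β_{r_i v}/δ_{r_i}, G_{(i+2),2} = β_{v r_i}/δ_v for i = 1,…,k, and all other entries zero (all parameters positive). Then the spectral radius of G is √(μ_vh² + Σ_{i=1}^k μ_{v r_i}²), where μ_vh² = (β_vh β_hv)/(δ_v δ_h) and μ_{v r_i}² = (β_{v r_i} β_{r_i v})/(δ_v δ_{r_i}). -/

import Mathlib

/-- Spectral radius of a real matrix: the supremum of the absolute values of the
(complex) roots of its characteristic polynomial. -/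
noncomputable def specRad {n : Type*} [Fintype n] [DecidableEq n]
    (A : Matrix n n ℝ) : ℝ :=
  sSup {r : ℝ | ∃ μ : ℂ, ((A.map (algebraMap ℝ ℂ)).charpoly).IsRoot μ ∧ r = ‖μ‖}

/-- The `(k+2)×(k+2)` next generation matrix of the star-shaped infection network:
index `0` is the human, index `1` the vector, and index `i+2` (for `0 ≤ i < k`)
reservoir `R_{i+1}`; `G₀₁ = β_vh/δ_v`, `G₁₀ = β_hv/δ_h`, `G₁,(i+2) = β_{r_i v}/δ_{r_i}`,
`G_{(i+2),1} = β_{v r_i}/δ_v`, and all other entries zero. -/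
noncomputable def Gstar (k : ℕ) (βvh βhv δh δv : ℝ) (βrv βvr δr : ℕ → ℝ) :
    Matrix (Fin (k + 2)) (Fin (k + 2)) ℝ :=
  Matrix.of fun i j =>
    if i.val = 0 ∧ j.val = 1 then βvh / δv
    else if i.val = 1 ∧ j.val = 0 then βhv / δh
    else if i.val = 1 ∧ 2 ≤ j.val then βrv (j.val - 2) / δr (j.val - 2)
    else if j.val = 1 ∧ 2 ≤ i.val then βvr (i.val - 2) / δv
    else 0

open Matrix in
lemma det_star_key (k : ℕ) (βvh βhv δh δv : ℝ) (βrv βvr δr : ℕ → ℝ) (μ : ℂ) :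
    (μ • (1 : Matrix (Fin (k+2)) (Fin (k+2)) ℂ)
        - (Gstar k βvh βhv δh δv βrv βvr δr).map (algebraMap ℝ ℂ)).det
      = μ ^ k * (μ ^ 2 - ((βvh * βhv / (δv * δh) +
          ∑ i : Fin k, βvr i * βrv i / (δv * δr i) : ℝ) : ℂ)) := by
  set S : ℂ := ((βvh * βhv / (δv * δh) +
      ∑ i : Fin k, βvr i * βrv i / (δv * δr i) : ℝ) : ℂ) with hS
  set P : Matrix (Fin (k+2)) (Fin 2) ℂ := Matrix.of fun i t =>
    if t = 0 then (if i.val = 1 then 1 else 0)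
    else (if i.val = 0 then ((βvh / δv : ℝ) : ℂ)
          else if 2 ≤ i.val then ((βvr (i.val - 2) / δv : ℝ) : ℂ) else 0) with hP
  set Q : Matrix (Fin 2) (Fin (k+2)) ℂ := Matrix.of fun t j =>
    if t = 0 then (if j.val = 0 then ((βhv / δh : ℝ) : ℂ)
          else if 2 ≤ j.val then ((βrv (j.val - 2) / δr (j.val - 2) : ℝ) : ℂ) else 0)
    else (if j.val = 1 then 1 else 0) with hQ
  have hfact : (Gstar k βvh βhv δh δv βrv βvr δr).map (algebraMap ℝ ℂ) = P * Q := by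
    ext i j
    simp only [hP, hQ, Matrix.map_apply, Gstar, Matrix.mul_apply, Fin.sum_univ_two,
      Matrix.of_apply, Fin.isValue, reduceIte, one_ne_zero, if_false, if_true,
      Complex.coe_algebraMap]
    split_ifs <;> first | omega | (push_cast; ring_nf)
  have hQP : Q * P = Matrix.of ![![0, S], ![1, 0]] := by
    ext a b
    fin_cases a <;> fin_cases b <;>
      simp only [hP, hQ, Matrix.mul_apply, Fin.sum_univ_succ, Matrix.of_apply, Fin.isValue,
        reduceIte, one_ne_zero, if_false, if_true, Fin.val_succ, Fin.val_zero, Fin.succ_zero_eq_one]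
    · -- (0,0)
      simp
    · -- (0,1) : the sum equal to S
      rw [hS]
      push_cast
      simp only [Matrix.cons_val', Matrix.cons_val_zero, Matrix.cons_val_one, Matrix.head_cons,
        zero_mul, zero_add]
      congr 1
      · ring
      · exact Finset.sum_congr rfl fun i _ => by ring
    · -- (1,0)
      simp
    · -- (1,1)
      simp
  rw [hfact]
  have key : ∀ μ : ℂ, μ ≠ 0 →
      (μ • (1 : Matrix (Fin (k+2)) (Fin (k+2)) ℂ) - P * Q).det = μ ^ k * (μ ^ 2 - S) := by
    intro μ hμ
    have h1 : μ • (1 : Matrix (Fin (k+2)) (Fin (k+2)) ℂ) - P * Q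
        = μ • ((1 : Matrix (Fin (k+2)) (Fin (k+2)) ℂ) - ((μ⁻¹ • P) * Q)) := by
      rw [smul_sub, Matrix.smul_mul, smul_smul, mul_inv_cancel₀ hμ, one_smul]
    rw [h1, Matrix.det_smul, Matrix.det_one_sub_mul_comm, Matrix.mul_smul, hQP]
    have h2 : ((1 : Matrix (Fin 2) (Fin 2) ℂ) - μ⁻¹ • Matrix.of ![![0, S], ![1, 0]]).det
        = 1 - μ⁻¹ * S * μ⁻¹ := by
      simp [Matrix.det_fin_two, Matrix.one_apply]
    rw [h2, Fintype.card_fin]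
    field_simp
    ring
  have hc1 : Continuous fun μ : ℂ =>
      (μ • (1 : Matrix (Fin (k+2)) (Fin (k+2)) ℂ) - P * Q).det :=
    Continuous.matrix_det ((continuous_id.smul continuous_const).sub continuous_const)
  have hc2 : Continuous fun μ : ℂ => μ ^ k * (μ ^ 2 - S) := by fun_prop
  have heq := Continuous.ext_on (dense_compl_singleton (0:ℂ)) hc1 hc2 (fun μ hμ => key μ hμ)
  exact congrFun heq μ


open Matrix Polynomial in
lemma charpoly_eval_eq {n : Type*} [Fintype n] [DecidableEq n] {R : Type*} [CommRing R]
    (M : Matrix n n R) (r : R) :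
    M.charpoly.eval r = (r • (1 : Matrix n n R) - M).det := by
  rw [Matrix.charpoly, _root_.eval_det, matPolyEquiv_charmatrix, eval_sub, eval_X, eval_C,
    Matrix.scalar_apply, ← Matrix.smul_one_eq_diagonal]

/-- The spectral radius of the star NGM is
`√(μ_vh² + Σ_i μ_{v r_i}²)` where `μ_vh² = β_vh β_hv/(δ_v δ_h)` and
`μ_{v r_i}² = β_{v r_i} β_{r_i v}/(δ_v δ_{r_i})`. -/
theorem specRad_star (k : ℕ) (βvh βhv δh δv : ℝ) (βrv βvr δr : ℕ → ℝ)
    (hβvh : 0 < βvh) (hβhv : 0 < βhv) (hδh : 0 < δh) (hδv : 0 < δv)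
    (hβrv : ∀ i : Fin k, 0 < βrv i) (hβvr : ∀ i : Fin k, 0 < βvr i)
    (hδr : ∀ i : Fin k, 0 < δr i) :
    specRad (Gstar k βvh βhv δh δv βrv βvr δr) =
      Real.sqrt (βvh * βhv / (δv * δh) +
        ∑ i : Fin k, βvr i * βrv i / (δv * δr i)) := by
  set Sr : ℝ := βvh * βhv / (δv * δh) + ∑ i : Fin k, βvr i * βrv i / (δv * δr i) with hSr
  have hS0 : 0 ≤ Sr := by
    have h1 : 0 < βvh * βhv / (δv * δh) := by positivity
    have h2 : 0 ≤ ∑ i : Fin k, βvr i * βrv i / (δv * δr i) :=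
      Finset.sum_nonneg fun i _ => by
        have := hβvr i; have := hβrv i; have := hδr i; positivity
    rw [hSr]; linarith
  -- root characterization
  have hroot : ∀ μ : ℂ,
      (((Gstar k βvh βhv δh δv βrv βvr δr).map (algebraMap ℝ ℂ)).charpoly).IsRoot μ ↔
        μ ^ k * (μ ^ 2 - (Sr : ℂ)) = 0 := by
    intro μ
    rw [Polynomial.IsRoot, charpoly_eval_eq, det_star_key]
  have hmem : Real.sqrt Sr ∈
      {r : ℝ | ∃ μ : ℂ, (((Gstar k βvh βhv δh δv βrv βvr δr).map
        (algebraMap ℝ ℂ)).charpoly).IsRoot μ ∧ r = ‖μ‖} := by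
    refine ⟨((Real.sqrt Sr : ℝ) : ℂ), ?_, ?_⟩
    · rw [hroot]
      have : ((Real.sqrt Sr : ℝ) : ℂ) ^ 2 = (Sr : ℂ) := by
        rw [← Complex.ofReal_pow, Real.sq_sqrt hS0]
      rw [this, sub_self, mul_zero]
    · rw [Complex.norm_real, Real.norm_eq_abs, abs_of_nonneg (Real.sqrt_nonneg _)]
  have hub : ∀ r ∈ {r : ℝ | ∃ μ : ℂ, (((Gstar k βvh βhv δh δv βrv βvr δr).map
      (algebraMap ℝ ℂ)).charpoly).IsRoot μ ∧ r = ‖μ‖}, r ≤ Real.sqrt Sr := by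
    rintro r ⟨μ, hμ, rfl⟩
    rw [hroot] at hμ
    rcases mul_eq_zero.1 hμ with h | h
    · have : μ = 0 := by
        rcases pow_eq_zero_iff'.mp h with ⟨h0, -⟩; exact h0
      simp [this, Real.sqrt_nonneg]
    · have hsq : μ ^ 2 = (Sr : ℂ) := by linear_combination h
      have habs : ‖μ‖ ^ 2 = Sr := by
        have := congrArg (‖·‖) hsq
        rwa [norm_pow, Complex.norm_real, Real.norm_eq_abs, abs_of_nonneg hS0] at this
      have : ‖μ‖ = Real.sqrt Sr := by
        rw [← habs, Real.sqrt_sq (norm_nonneg μ)]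
      rw [this]
  rw [specRad]
  exact le_antisymm (csSup_le ⟨_, hmem⟩ hub) (le_csSup ⟨_, hub⟩ hmem)
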